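/- Let f_1, ..., f_n : ℝ^d → ℝ be twice continuously differentiable, and suppose that for each j and every w ∈ ℝ^d and v ∈ ℝ^d, |⟨v, ∇²f_j(w) v⟩| ≤ β₁‖v‖². Let F̂ = (1/n)∑_{j=1}^n f_j and fix i ∈ [n]. If ŵ_i is a global minimizer over ℝ^d of w ↦ (1/n)∑_{j≠i} f_j(w), then for every v ∈ ℝ^d, ⟨v, ∇²F̂(ŵ_i) v⟩ ≥ −(β₁/n)‖v‖². In particular, if n > β₁/γ for some γ > 0, then ⟨v, ∇²F̂(ŵ_i) v⟩ > −γ‖v‖² for all nonzero v. -/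

import Mathlib

open Set Filter Topology

/-- Second derivative along a line equals the Hessian quadratic form. -/
lemma secondDeriv_line {E : Type*} [NormedAddCommGroup E] [NormedSpace ℝ E]
    {g : E → ℝ} (hg : ContDiff ℝ 2 g) (x v : E) :
    deriv (deriv (fun t : ℝ => g (x + t • v))) 0 = iteratedFDeriv ℝ 2 g x ![v, v] := by
  have hc : ∀ t : ℝ, HasDerivAt (fun s : ℝ => x + s • v) v t := by
    intro t
    simpa using ((hasDerivAt_id t).smul_const v).const_add x
  have hg1 : Differentiable ℝ g := hg.differentiable (by norm_num)
  have hderiv : deriv (fun t : ℝ => g (x + t • v)) = fun t => fderiv ℝ g (x + t • v) v := by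
    funext t
    exact (((hg1 (x + t • v)).hasFDerivAt).comp_hasDerivAt t (hc t)).deriv
  rw [hderiv]
  have hg2 : DifferentiableAt ℝ (fderiv ℝ g) x := by
    have : ContDiff ℝ 1 (fderiv ℝ g) := hg.fderiv_right (by norm_num)
    exact (this.differentiable one_ne_zero) x
  have h1 : HasDerivAt (fun t : ℝ => fderiv ℝ g (x + t • v)) (fderiv ℝ (fderiv ℝ g) x v) 0 := by
    have hx : HasFDerivAt (fderiv ℝ g) (fderiv ℝ (fderiv ℝ g) x) (x + (0:ℝ) • v) := by
      simpa using hg2.hasFDerivAt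
    exact hx.comp_hasDerivAt 0 (hc 0)
  have h2 : HasDerivAt (fun t : ℝ => fderiv ℝ g (x + t • v) v)
      (fderiv ℝ (fderiv ℝ g) x v v) 0 :=
    (ContinuousLinearMap.apply ℝ ℝ v).hasFDerivAt.comp_hasDerivAt 0 h1
  rw [h2.deriv, iteratedFDeriv_two_apply]
  simp

/-- Second-order necessary condition in one dimension. -/
lemma second_deriv_nonneg_of_min {φ : ℝ → ℝ} (hφ : ContDiff ℝ 2 φ)
    (hmin : ∀ t, φ 0 ≤ φ t) : 0 ≤ deriv (deriv φ) 0 := by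
  by_contra hcon
  push_neg at hcon
  have hlm : IsLocalMin φ 0 := Filter.Eventually.of_forall hmin
  have h0 : deriv φ 0 = 0 := hlm.deriv_eq_zero
  have hφ' : ContDiff ℝ 1 (deriv φ) := by
    have h2 : ContDiff ℝ ((1 : ℕ) + 1) φ := by exact_mod_cast hφ
    exact (contDiff_succ_iff_deriv.mp h2).2.2
  have hdd : HasDerivAt (deriv φ) (deriv (deriv φ) 0) 0 :=
    ((hφ'.differentiable one_ne_zero) 0).hasDerivAt
  have hslope : Tendsto (slope (deriv φ) 0) (𝓝[≠] 0) (𝓝 (deriv (deriv φ) 0)) :=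
    hasDerivAt_iff_tendsto_slope.mp hdd
  have hev : ∀ᶠ t in 𝓝[≠] (0:ℝ), slope (deriv φ) 0 t < 0 :=
    hslope.eventually (Filter.Tendsto.eventually_lt_const hcon tendsto_id) |>.mono (fun t ht => ht)
  have hev' : ∀ᶠ t in 𝓝[>] (0:ℝ), slope (deriv φ) 0 t < 0 :=
    hev.filter_mono (nhdsWithin_mono 0 (fun t ht => ne_of_gt ht))
  obtain ⟨δ, hδ, hIoo⟩ := (nhdsGT_basis (0:ℝ)).eventually_iff.mp hev'
  have hneg : ∀ t ∈ Ioo (0:ℝ) δ, deriv φ t < 0 := by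
    intro t ht
    have := hIoo ht
    rw [slope_def_field, h0] at this
    have ht0 : 0 < t := ht.1
    have h2 : deriv φ t / t < 0 := by simpa using this
    calc deriv φ t = (deriv φ t / t) * t := by field_simp
    _ < 0 := mul_neg_of_neg_of_pos h2 ht0
  have hanti : StrictAntiOn φ (Icc 0 δ) := by
    apply strictAntiOn_of_deriv_neg (convex_Icc 0 δ) (hφ.continuous.continuousOn)
    intro t ht
    rw [interior_Icc] at ht
    exact hneg t ht
  have : φ δ < φ 0 := hanti (left_mem_Icc.mpr hδ.le) (right_mem_Icc.mpr hδ.le) hδ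
  exact absurd (hmin δ) (not_le.mpr this)

/-- If each `f j` is `C²` with Hessian quadratic form bounded in
absolute value by `β₁‖v‖²`, and `ŵᵢ` is a global minimizer of the leave-one-out
average, then the Hessian quadratic form of `F̂ = (1/n)∑ f j` at `ŵᵢ` is bounded
below by `−(β₁/n)‖v‖²`; in particular if `n > β₁/γ` with `γ > 0`, it is
`> −γ‖v‖²` for every nonzero `v`. -/
theorem stmt_1 {d n : ℕ} (f : Fin n → EuclideanSpace ℝ (Fin d) → ℝ) (β₁ : ℝ)
    (hsmooth : ∀ j, ContDiff ℝ 2 (f j))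
    (hhess : ∀ j (w v : EuclideanSpace ℝ (Fin d)),
      |iteratedFDeriv ℝ 2 (f j) w ![v, v]| ≤ β₁ * ‖v‖ ^ 2)
    (i : Fin n) (wi : EuclideanSpace ℝ (Fin d))
    (hmin : ∀ w, (1 / n : ℝ) * ∑ j ∈ Finset.univ.erase i, f j wi ≤
      (1 / n : ℝ) * ∑ j ∈ Finset.univ.erase i, f j w) :
    (∀ v : EuclideanSpace ℝ (Fin d),
      iteratedFDeriv ℝ 2 (fun w => (1 / n : ℝ) * ∑ j, f j w) wi ![v, v]
        ≥ -(β₁ / n) * ‖v‖ ^ 2) ∧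
    ∀ γ : ℝ, 0 < γ → (n : ℝ) > β₁ / γ → ∀ v : EuclideanSpace ℝ (Fin d), v ≠ 0 →
      iteratedFDeriv ℝ 2 (fun w => (1 / n : ℝ) * ∑ j, f j w) wi ![v, v]
        > -γ * ‖v‖ ^ 2 := by
  have hn : 0 < n := i.pos
  have hn' : (0:ℝ) < 1 / n := by positivity
  set G : EuclideanSpace ℝ (Fin d) → ℝ := fun w => ∑ j ∈ Finset.univ.erase i, f j w with hG
  have hGc : ContDiff ℝ 2 G := ContDiff.sum fun j _ => hsmooth j
  have hGmin : ∀ w, G wi ≤ G w := fun w => le_of_mul_le_mul_left (hmin w) hn'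
  have hQG : ∀ v : EuclideanSpace ℝ (Fin d), 0 ≤ iteratedFDeriv ℝ 2 G wi ![v, v] := by
    intro v
    rw [← secondDeriv_line hGc wi v]
    apply second_deriv_nonneg_of_min
    · exact hGc.comp (contDiff_const.add (contDiff_id.smul contDiff_const))
    · intro t
      simpa using hGmin (wi + t • v)
  have hsplit : (fun w => (1 / n : ℝ) * ∑ j, f j w)
      = (1 / n : ℝ) • (fun w => f i w + G w) := by
    funext w
    have h := Finset.add_sum_erase Finset.univ (fun j => f j w) (Finset.mem_univ i)
    simp only [Pi.smul_apply, smul_eq_mul, hG]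
    rw [← h]
  have hQ : ∀ v : EuclideanSpace ℝ (Fin d),
      iteratedFDeriv ℝ 2 (fun w => (1 / n : ℝ) * ∑ j, f j w) wi ![v, v]
      = (1 / n : ℝ) * (iteratedFDeriv ℝ 2 (f i) wi ![v, v]
          + iteratedFDeriv ℝ 2 G wi ![v, v]) := by
    intro v
    rw [hsplit, iteratedFDeriv_const_smul_apply ((hsmooth i).add hGc).contDiffAt,
      ContinuousMultilinearMap.smul_apply, smul_eq_mul,
      iteratedFDeriv_add_apply' (hsmooth i).contDiffAt hGc.contDiffAt, ContinuousMultilinearMap.add_apply]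
  have part1 : ∀ v : EuclideanSpace ℝ (Fin d),
      iteratedFDeriv ℝ 2 (fun w => (1 / n : ℝ) * ∑ j, f j w) wi ![v, v]
        ≥ -(β₁ / n) * ‖v‖ ^ 2 := by
    intro v
    rw [hQ v]
    have h1 : -(β₁ * ‖v‖ ^ 2) ≤ iteratedFDeriv ℝ 2 (f i) wi ![v, v] :=
      neg_le_of_abs_le (hhess i wi v)
    have h2 := hQG v
    have : -(β₁ * ‖v‖ ^ 2) ≤ iteratedFDeriv ℝ 2 (f i) wi ![v, v]
        + iteratedFDeriv ℝ 2 G wi ![v, v] := by linarith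
    have := mul_le_mul_of_nonneg_left this hn'.le
    calc -(β₁ / n) * ‖v‖ ^ 2 = (1 / n : ℝ) * -(β₁ * ‖v‖ ^ 2) := by ring
    _ ≤ _ := this
  refine ⟨part1, fun γ hγ hnγ v hv => ?_⟩
  have h1 := part1 v
  have hv2 : (0:ℝ) < ‖v‖ ^ 2 := by
    have := norm_pos_iff.mpr hv
    positivity
  have hβ : β₁ / n < γ := by
    rw [div_lt_iff₀ (by exact_mod_cast hn)]
    have hnγ' : β₁ / γ < (n:ℝ) := hnγ
    rw [div_lt_iff₀ hγ] at hnγ'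
    nlinarith
  have : -γ * ‖v‖ ^ 2 < -(β₁ / n) * ‖v‖ ^ 2 := by nlinarith
  linarith
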